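/- Let w* ∈ R^d be a unit vector, let z₁, …, z_{d−1} ∈ R^d satisfy |w*·z_i| ≤ ε̄ for all i, let ŵ be a unit vector orthogonal to every z_i, and suppose the matrix Z = [z₁ ⋯ z_{d−1}] has smallest singular value σ_{d−1}(Z) ≥ σ > 0. Then (w*·ŵ)² ≥ 1 − √d · ε̄ / σ. -/

import Mathlib

open scoped RealInnerProductSpace

theorem stmt14 {d : ℕ} (wstar what : EuclideanSpace ℝ (Fin d))
    (z : Fin (d - 1) → EuclideanSpace ℝ (Fin d))
    (εbar σ : ℝ) (hεbar : 0 ≤ εbar) (hσpos : 0 < σ)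
    (hwstar : ‖wstar‖ = 1) (hwhat : ‖what‖ = 1)
    (hz : ∀ i, |⟪wstar, z i⟫| ≤ εbar)
    (horth : ∀ i, ⟪z i, what⟫ = 0)
    (hσ : ∀ β : EuclideanSpace ℝ (Fin (d - 1)), σ * ‖β‖ ≤ ‖∑ i, β i • z i‖) :
    ⟪wstar, what⟫ ^ 2 ≥ 1 - Real.sqrt d * εbar / σ := by
  have hd : 1 ≤ d := by
    by_contra h
    interval_cases d
    · have : wstar = 0 := Subsingleton.elim _ _
      rw [this, norm_zero] at hwstar
      exact one_ne_zero hwstar.symm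
  set c : ℝ := ⟪wstar, what⟫ with hc
  set v : EuclideanSpace ℝ (Fin d) := wstar - c • what with hv
  have hwhat0 : what ≠ 0 := by
    intro h; rw [h, norm_zero] at hwhat; exact one_ne_zero hwhat.symm
  -- linear independence of z
  have hli : LinearIndependent ℝ z := by
    rw [Fintype.linearIndependent_iff]
    intro g hg i
    have h1 := hσ (WithLp.toLp 2 g)
    simp only [PiLp.toLp_apply] at h1
    rw [hg, norm_zero] at h1
    have h0 : ‖(WithLp.toLp 2 g : EuclideanSpace ℝ (Fin (d-1)))‖ = 0 := by
      have h2 := norm_nonneg (WithLp.toLp 2 g : EuclideanSpace ℝ (Fin (d-1)))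
      nlinarith
    rw [norm_eq_zero] at h0
    have : (WithLp.toLp 2 g : EuclideanSpace ℝ (Fin (d-1))) i = (0 : EuclideanSpace ℝ (Fin (d-1))) i := by rw [h0]
    simpa using this
  -- dimensions
  have hspan : Module.finrank ℝ (Submodule.span ℝ (Set.range z)) = d - 1 := by
    rw [finrank_span_eq_card hli, Fintype.card_fin]
  have hdim : Module.finrank ℝ (EuclideanSpace ℝ (Fin d)) = d := finrank_euclideanSpace_fin
  have horthdim : Module.finrank ℝ (Submodule.span ℝ (Set.range z))ᗮ = 1 := by
    have := Submodule.finrank_add_finrank_orthogonal (K := Submodule.span ℝ (Set.range z))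
    omega
  -- what spans the orthogonal complement
  have hwhatmem : what ∈ (Submodule.span ℝ (Set.range z))ᗮ := by
    rw [Submodule.mem_orthogonal]
    intro u hu
    induction hu using Submodule.span_induction with
    | mem x hx => obtain ⟨i, rfl⟩ := hx; exact horth i
    | zero => simp
    | add x y _ _ hx hy => rw [inner_add_left, hx, hy, add_zero]
    | smul a x _ hx => rw [inner_smul_left, hx, mul_zero]
  have hle : (Submodule.span ℝ {what}) ≤ (Submodule.span ℝ (Set.range z))ᗮ := by
    rw [Submodule.span_singleton_le_iff_mem]; exact hwhatmem
  have heq : (Submodule.span ℝ {what}) = (Submodule.span ℝ (Set.range z))ᗮ :=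
    Submodule.eq_of_le_of_finrank_eq hle (by rw [horthdim, finrank_span_singleton hwhat0])
  -- v is orthogonal to what, hence in span z
  have hvwhat : ⟪what, v⟫ = 0 := by
    rw [hv, inner_sub_right, inner_smul_right, real_inner_self_eq_norm_sq, hwhat,
      real_inner_comm, ← hc]
    ring
  have hvmem : v ∈ Submodule.span ℝ (Set.range z) := by
    rw [← Submodule.orthogonal_orthogonal (Submodule.span ℝ (Set.range z)), ← heq,
      Submodule.mem_orthogonal]
    intro u hu
    obtain ⟨a, rfl⟩ := Submodule.mem_span_singleton.mp hu
    rw [inner_smul_left, hvwhat]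
    simp
  obtain ⟨β, hβ⟩ := (Submodule.mem_span_range_iff_exists_fun ℝ).mp hvmem
  set βE : EuclideanSpace ℝ (Fin (d-1)) := WithLp.toLp 2 β with hβEdef
  have hβE : ∑ i, βE i • z i = v := hβ
  -- key identity
  have hkey : ⟪wstar, v⟫ = 1 - c ^ 2 := by
    rw [hv, inner_sub_right, inner_smul_right, real_inner_self_eq_norm_sq, hwstar, ← hc]
    ring
  have hnv2 : ‖v‖ ^ 2 = 1 - c ^ 2 := by
    rw [← real_inner_self_eq_norm_sq]
    nth_rewrite 1 [hv]
    rw [inner_sub_left, hkey]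
    have h3 : ⟪c • what, v⟫ = c * ⟪what, v⟫ := by rw [inner_smul_left]; norm_num
    rw [h3, hvwhat, mul_zero, sub_zero]
  have hnv : ‖v‖ ≤ 1 := by
    nlinarith [norm_nonneg v, sq_nonneg c]
  have hβn : σ * ‖βE‖ ≤ 1 := by
    calc σ * ‖βE‖ ≤ ‖∑ i, βE i • z i‖ := hσ βE
    _ = ‖v‖ := by rw [hβE]
    _ ≤ 1 := hnv
  have hsum : 1 - c ^ 2 = ∑ i, β i * ⟪wstar, z i⟫ := by
    rw [← hkey, ← hβ, inner_sum]
    exact Finset.sum_congr rfl fun i _ => real_inner_smul_right _ _ _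
  have hb1 : 1 - c ^ 2 ≤ (∑ i, |β i|) * εbar := by
    rw [hsum, Finset.sum_mul]
    refine Finset.sum_le_sum fun i _ => ?_
    calc β i * ⟪wstar, z i⟫ ≤ |β i * ⟪wstar, z i⟫| := le_abs_self _
    _ = |β i| * |⟪wstar, z i⟫| := abs_mul _ _
    _ ≤ |β i| * εbar := mul_le_mul_of_nonneg_left (hz i) (abs_nonneg _)
  have hbn : ‖βE‖ ^ 2 = ∑ i, |β i| ^ 2 := by
    rw [EuclideanSpace.norm_eq, Real.sq_sqrt (by positivity)]
    exact Finset.sum_congr rfl fun i _ => by rw [Real.norm_eq_abs]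
  have hl1 : (∑ i, |β i|) ≤ Real.sqrt ((d - 1 : ℕ) : ℝ) * ‖βE‖ := by
    have h2 : (∑ i, |β i|) ^ 2 ≤ ((d - 1 : ℕ) : ℝ) * ∑ i, |β i| ^ 2 := by
      simpa [Finset.card_fin] using
        sq_sum_le_card_mul_sum_sq (s := Finset.univ) (f := fun i => |β i|)
    have hS : (0:ℝ) ≤ ∑ i, |β i| := by positivity
    calc (∑ i, |β i|) = Real.sqrt ((∑ i, |β i|) ^ 2) := (Real.sqrt_sq hS).symm
    _ ≤ Real.sqrt (((d - 1 : ℕ) : ℝ) * ‖βE‖ ^ 2) := Real.sqrt_le_sqrt (by rw [hbn]; exact h2)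
    _ = Real.sqrt ((d - 1 : ℕ) : ℝ) * ‖βE‖ := by
        rw [Real.sqrt_mul (Nat.cast_nonneg _), Real.sqrt_sq (norm_nonneg _)]
  have hβinv : ‖βE‖ ≤ 1 / σ := by
    rw [le_div_iff₀ hσpos]
    linarith [hβn]
  have hsqle : Real.sqrt ((d - 1 : ℕ) : ℝ) ≤ Real.sqrt d :=
    Real.sqrt_le_sqrt (by exact_mod_cast Nat.sub_le d 1)
  have hfin : 1 - c ^ 2 ≤ Real.sqrt d * εbar / σ := by
    calc 1 - c ^ 2 ≤ (∑ i, |β i|) * εbar := hb1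
    _ ≤ (Real.sqrt d * (1 / σ)) * εbar := by
        refine mul_le_mul_of_nonneg_right ?_ hεbar
        calc (∑ i, |β i|) ≤ Real.sqrt ((d - 1 : ℕ) : ℝ) * ‖βE‖ := hl1
        _ ≤ Real.sqrt d * (1 / σ) :=
          mul_le_mul hsqle hβinv (norm_nonneg _) (Real.sqrt_nonneg _)
    _ = Real.sqrt d * εbar / σ := by ring
  linarith
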